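/- For centered bivariate Gaussians, if I₁(w, τ₁², τ₂²) = Diag(τ₂²/τ₁², 1/(2τ₁⁴), 1/(2τ₂⁴)) and I₂(w, τ₁², τ₂²) = Diag(τ₁²/τ₂², 1/(2τ₂⁴), 1/(2τ₁⁴)) denote the Fisher information matrices of the two causal parameterizations, and γ is the reparameterization γ(w, τ₁², τ₂²) = (wτ₂²/(w²τ₂²+τ₁²), w²τ₂²+τ₁², τ₁²τ₂²/(w²τ₂²+τ₁²)) with Jacobian J_γ, then det I₁(θ) = det I₂(γ(θ)) · (det J_γ(θ))², and consequently det I₁(θ)/det I₂(γ(θ)) = (τ₂²/(w²τ₂²+τ₁²))² for all θ = (w, τ₁², τ₂²) with τ₁², τ₂² > 0. -/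

import Mathlib

open Matrix

/-- The parameter transformation between the two observationally equivalent
bivariate linear Gaussian SEMs. -/
noncomputable def gammaMap (p : ℝ × ℝ × ℝ) : ℝ × ℝ × ℝ :=
  ⟨p.1 * p.2.2 / (p.1 ^ 2 * p.2.2 + p.2.1),
   p.1 ^ 2 * p.2.2 + p.2.1,
   p.2.1 * p.2.2 / (p.1 ^ 2 * p.2.2 + p.2.1)⟩

/-- The components of `gammaMap`. -/
noncomputable def gammaComp : Fin 3 → (ℝ × ℝ × ℝ) → ℝ
  | 0 => fun p => (gammaMap p).1
  | 1 => fun p => (gammaMap p).2.1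
  | 2 => fun p => (gammaMap p).2.2

/-- Standard basis directions of `ℝ × ℝ × ℝ`. -/
def stdDir : Fin 3 → ℝ × ℝ × ℝ
  | 0 => (1, 0, 0)
  | 1 => (0, 1, 0)
  | 2 => (0, 0, 1)

/-- The Jacobian matrix of `gammaMap` at a point. -/
noncomputable def gammaJacobian (p : ℝ × ℝ × ℝ) : Matrix (Fin 3) (Fin 3) ℝ :=
  Matrix.of fun i j => fderiv ℝ (gammaComp i) p (stdDir j)

/-- Fisher information of the forward parameterization. -/
noncomputable def fisherI1 (p : ℝ × ℝ × ℝ) : Matrix (Fin 3) (Fin 3) ℝ :=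
  Matrix.diagonal ![p.2.2 / p.2.1, 1 / (2 * p.2.1 ^ 2), 1 / (2 * p.2.2 ^ 2)]

/-- Fisher information of the reverse parameterization. -/
noncomputable def fisherI2 (p : ℝ × ℝ × ℝ) : Matrix (Fin 3) (Fin 3) ℝ :=
  Matrix.diagonal ![p.2.1 / p.2.2, 1 / (2 * p.2.2 ^ 2), 1 / (2 * p.2.1 ^ 2)]

set_option maxHeartbeats 1000000 in
open ContinuousLinearMap in
theorem stmt_18 (w τ1 τ2 : ℝ) (h1 : 0 < τ1) (h2 : 0 < τ2) :
    (fisherI1 (w, τ1, τ2)).det =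
        (fisherI2 (gammaMap (w, τ1, τ2))).det * (gammaJacobian (w, τ1, τ2)).det ^ 2 ∧
      (fisherI1 (w, τ1, τ2)).det / (fisherI2 (gammaMap (w, τ1, τ2))).det =
        (τ2 / (w ^ 2 * τ2 + τ1)) ^ 2 := by
  have hs0 : 0 < w ^ 2 * τ2 + τ1 := by positivity
  have hs : w ^ 2 * τ2 + τ1 ≠ 0 := ne_of_gt hs0
  have ht1 : τ1 ≠ 0 := ne_of_gt h1
  have ht2 : τ2 ≠ 0 := ne_of_gt h2
  set p : ℝ × ℝ × ℝ := (w, τ1, τ2) with hp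
  have hF : HasFDerivAt (fun q : ℝ×ℝ×ℝ => q.1) (fst ℝ ℝ (ℝ×ℝ)) p := hasFDerivAt_fst
  have hA : HasFDerivAt (fun q : ℝ×ℝ×ℝ => q.2.1) ((fst ℝ ℝ ℝ).comp (snd ℝ ℝ (ℝ×ℝ))) p :=
    hasFDerivAt_fst.comp p hasFDerivAt_snd
  have hB : HasFDerivAt (fun q : ℝ×ℝ×ℝ => q.2.2) ((snd ℝ ℝ ℝ).comp (snd ℝ ℝ (ℝ×ℝ))) p :=
    hasFDerivAt_snd.comp p hasFDerivAt_snd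
  have hg' := ((hF.mul hF).mul hB).add hA
  have e : (fun q : ℝ×ℝ×ℝ => q.1*q.1*q.2.2 + q.2.1) = (fun q : ℝ×ℝ×ℝ => q.1^2*q.2.2 + q.2.1) := by
    funext q; ring
  simp only [Pi.mul_def, Pi.add_def] at hg'
  rw [e] at hg'
  have hinv := (hasDerivAt_inv
    (show (w,τ1,τ2).1^2*(w,τ1,τ2).2.2 + (w,τ1,τ2).2.1 ≠ 0 from hs)).comp_hasFDerivAt p hg'
  simp only [Function.comp_def] at hinv
  have h0 := (hF.mul hB).mul hinv
  have h2' := (hA.mul hB).mul hinv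
  simp only [Pi.mul_def] at h0 h2'
  have e0 : gammaComp 0 = fun q : ℝ×ℝ×ℝ => q.1*q.2.2 * (q.1^2*q.2.2 + q.2.1)⁻¹ := by
    funext q; simp [gammaComp, gammaMap, div_eq_mul_inv]
  have e1 : gammaComp 1 = fun q : ℝ×ℝ×ℝ => q.1^2*q.2.2 + q.2.1 := by
    funext q; simp [gammaComp, gammaMap]
  have e2 : gammaComp 2 = fun q : ℝ×ℝ×ℝ => q.2.1*q.2.2 * (q.1^2*q.2.2 + q.2.1)⁻¹ := by
    funext q; simp [gammaComp, gammaMap, div_eq_mul_inv]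
  have j00 : fderiv ℝ (gammaComp 0) p (stdDir 0) = τ2*(τ1 - w^2*τ2)/(w^2*τ2+τ1)^2 := by
    rw [e0, h0.fderiv]; simp [stdDir, hp]; try field_simp; try ring
  have j01 : fderiv ℝ (gammaComp 0) p (stdDir 1) = -(w*τ2)/(w^2*τ2+τ1)^2 := by
    rw [e0, h0.fderiv]; simp [stdDir, hp]; try field_simp; try ring
  have j02 : fderiv ℝ (gammaComp 0) p (stdDir 2) = w*τ1/(w^2*τ2+τ1)^2 := by
    rw [e0, h0.fderiv]; simp [stdDir, hp]; try field_simp; try ring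
  have j10 : fderiv ℝ (gammaComp 1) p (stdDir 0) = 2*w*τ2 := by
    rw [e1, hg'.fderiv]; simp [stdDir, hp]; try ring
  have j11 : fderiv ℝ (gammaComp 1) p (stdDir 1) = 1 := by
    rw [e1, hg'.fderiv]; simp [stdDir, hp]
  have j12 : fderiv ℝ (gammaComp 1) p (stdDir 2) = w^2 := by
    rw [e1, hg'.fderiv]; simp [stdDir, hp]; try ring
  have j20 : fderiv ℝ (gammaComp 2) p (stdDir 0) = -(2*w*τ1*τ2^2)/(w^2*τ2+τ1)^2 := by
    rw [e2, h2'.fderiv]; simp [stdDir, hp]; try field_simp; try ring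
  have j21 : fderiv ℝ (gammaComp 2) p (stdDir 1) = w^2*τ2^2/(w^2*τ2+τ1)^2 := by
    rw [e2, h2'.fderiv]; simp [stdDir, hp]; try field_simp; try ring
  have j22 : fderiv ℝ (gammaComp 2) p (stdDir 2) = τ1^2/(w^2*τ2+τ1)^2 := by
    rw [e2, h2'.fderiv]; simp [stdDir, hp]; try field_simp; try ring
  have hdJ : (gammaJacobian p).det = τ2 / (w^2*τ2+τ1) := by
    rw [Matrix.det_fin_three]
    simp only [gammaJacobian, Matrix.of_apply]
    rw [j00, j01, j02, j10, j11, j12, j20, j21, j22]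
    field_simp
    ring
  have hd1 : (fisherI1 p).det = 1 / (4 * τ1^3 * τ2) := by
    simp [fisherI1, Matrix.det_diagonal, Fin.prod_univ_three, hp]
    field_simp; ring
  have hd2 : (fisherI2 (gammaMap p)).det = (w^2*τ2+τ1)^2 / (4 * τ1^3 * τ2^3) := by
    simp [fisherI2, gammaMap, Matrix.det_diagonal, Fin.prod_univ_three, hp]
    field_simp; ring
  rw [hd1, hd2, hdJ]
  constructor <;> field_simp
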